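/- Fix a positive integer t and let μ be a nonempty overpartition all of whose parts equal t with none overlined, having m parts. Then μ has exactly 2m pre-images under φ among overpartitions in G_t; exactly m of these pre-images have no overlined parts and the other m have exactly one overlined part (the first occurrence of the smallest part). -/

import Mathlib

/-- An overpartition: a multiset of parts together with the finite set of
overlined part sizes. -/
abbrev OP : Type := Multiset ℕ × Finset ℕ

/-- Validity: all parts positive, and every overlined size actually occurs as a part
(so at most one part of each size is overlined). -/
def OP.IsValid (π : OP) : Prop := (∀ p ∈ π.1, 0 < p) ∧ ∀ p ∈ π.2, p ∈ π.1

/-- The weight (sum of parts). -/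
def OP.wt (π : OP) : ℕ := π.1.sum

/-- The number of parts. -/
def OP.len (π : OP) : ℕ := Multiset.card π.1

/-- The number of overlined parts. -/
def OP.o (π : OP) : ℕ := π.2.card

/-- The largest part. -/
def OP.maxPart (π : OP) : ℕ := π.1.sup

/-- The smallest part. -/
noncomputable def OP.minPart (π : OP) : ℕ := sInf {p | p ∈ π.1}

/-- The number of parts equal to `t`. -/
def OP.mT (t : ℕ) (π : OP) : ℕ := π.1.count t

/-- Membership in `G_t`: nonempty, valid, largest minus smallest part at most `t`,
and the largest part not overlined when this difference is exactly `t`. -/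
def InG (t : ℕ) (π : OP) : Prop :=
  π.IsValid ∧ π.1 ≠ 0 ∧ π.maxPart - π.minPart ≤ t ∧
    (π.maxPart - π.minPart = t → π.maxPart ∉ π.2)

/-- Membership in `P_t`: nonempty, valid, all parts at most `t`, no part `t` overlined. -/
def InP (t : ℕ) (π : OP) : Prop :=
  π.IsValid ∧ π.1 ≠ 0 ∧ (∀ p ∈ π.1, p ≤ t) ∧ t ∉ π.2

/-- The map `φ`: each part is replaced by its residue mod `t` (deleted if zero,
retaining its overline) together with `⌊part/t⌋` non-overlined copies of `t`. -/
def phi (t : ℕ) (π : OP) : OP :=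
  (Multiset.replicate (π.1.map (· / t)).sum t + (π.1.map (· % t)).filter (· ≠ 0),
   (π.2.image (· % t)).erase 0)

/-- Membership in `B_t`: bipartitions whose first component has all parts equal to `t`
(none overlined) and whose second component is a nonempty overpartition with parts `≤ t`. -/
def InB (t : ℕ) (b : Multiset ℕ × OP) : Prop :=
  (∀ a ∈ b.1, a = t) ∧ b.2.IsValid ∧ b.2.1 ≠ 0 ∧ ∀ p ∈ b.2.1, p ≤ t

/-- The map `ψ`: merge the two components, un-overlining any overlined `t`. -/
def psi (t : ℕ) (b : Multiset ℕ × OP) : OP := (b.1 + b.2.1, b.2.2.erase t)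

namespace PreimageProof

/-- The unique preimage part-multiset with `n` parts. -/
def base (t m n : ℕ) : Multiset ℕ :=
  Multiset.replicate (n - m % n) (m / n * t) + Multiset.replicate (m % n) ((m / n + 1) * t)

lemma card_base (t m n : ℕ) (hn : 0 < n) : Multiset.card (base t m n) = n := by
  have := Nat.mod_lt m hn
  simp only [base, Multiset.card_add, Multiset.card_replicate]
  omega

lemma mem_base (t m n : ℕ) {x : ℕ} (hx : x ∈ base t m n) :
    x = m / n * t ∨ x = (m / n + 1) * t := by
  rcases Multiset.mem_add.1 hx with h | h
  · exact Or.inl (Multiset.eq_of_mem_replicate h)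
  · exact Or.inr (Multiset.eq_of_mem_replicate h)

lemma fst_mem_base (t m n : ℕ) (hn : 0 < n) : m / n * t ∈ base t m n := by
  have := Nat.mod_lt m hn
  exact Multiset.mem_add.2 (Or.inl (Multiset.mem_replicate.2 ⟨by omega, rfl⟩))

lemma min_base (t m n : ℕ) (hn : 0 < n) :
    OP.minPart (base t m n, (∅ : Finset ℕ)) = m / n * t := by
  unfold OP.minPart
  show sInf {p | p ∈ base t m n} = m / n * t
  have hmem : sInf {p | p ∈ base t m n} ∈ base t m n :=
    by have := Nat.sInf_mem (s := {p | p ∈ base t m n}) ⟨_, fst_mem_base t m n hn⟩; exact this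
  have hle : sInf {p | p ∈ base t m n} ≤ m / n * t := Nat.sInf_le (fst_mem_base t m n hn)
  rcases mem_base t m n hmem with h | h
  · exact h
  · have : m / n * t ≤ (m / n + 1) * t := Nat.mul_le_mul_right _ (by omega)
    omega

/-- The candidate preimage with `n` parts; `b` records whether the smallest part
is overlined. -/
def cand (t m n : ℕ) (b : Bool) : OP :=
  (base t m n, if b then {m / n * t} else ∅)

lemma min_cand (t m n : ℕ) (hn : 0 < n) (b : Bool) :
    OP.minPart (cand t m n b) = m / n * t :=
  min_base t m n hn

/-- Backward direction: the candidates are genuine preimages. -/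
lemma backward (t : ℕ) (ht : 0 < t) (m n : ℕ) (hn : 0 < n) (hnm : n ≤ m)
    (s : Finset ℕ) (hs : s = ∅ ∨ s = {m / n * t}) :
    InG t (base t m n, s) ∧
      phi t (base t m n, s) = (Multiset.replicate m t, (∅ : Finset ℕ)) := by
  have ha : 1 ≤ m / n := (Nat.one_le_div_iff hn).2 hnm
  have hk : m % n < n := Nat.mod_lt m hn
  have hposmem : ∀ x ∈ base t m n, 0 < x := by
    intro x hx
    rcases mem_base t m n hx with rfl | rfl <;> positivity
  have hsub : ∀ p ∈ s, p ∈ base t m n := by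
    intro p hp
    rcases hs with rfl | rfl
    · simp at hp
    · simp only [Finset.mem_singleton] at hp
      subst hp; exact fst_mem_base t m n hn
  have hne : base t m n ≠ 0 := by
    intro h
    have := card_base t m n hn
    rw [h] at this; simp at this; omega
  have hminb : OP.minPart (base t m n, s) = m / n * t := min_cand t m n hn false ▸ min_base t m n hn
  have hmaxle : OP.maxPart (base t m n, s) ≤ (m / n + 1) * t := by
    rw [OP.maxPart, Multiset.sup_le]
    intro b hb
    rcases mem_base t m n hb with rfl | rfl
    · exact Nat.mul_le_mul_right _ (by omega)
    · exact le_rfl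
  have hdiff : OP.maxPart (base t m n, s) - OP.minPart (base t m n, s) ≤ t := by
    rw [hminb]
    have h3 : (m / n + 1) * t = m / n * t + t := by ring
    omega
  refine ⟨⟨⟨hposmem, hsub⟩, hne, hdiff, ?_⟩, ?_⟩
  · -- if difference is exactly t, max not overlined
    intro hdt hmem
    have hmx : OP.maxPart (base t m n, s) = m / n * t := by
      rcases hs with rfl | rfl
      · simp at hmem
      · exact Finset.mem_singleton.1 hmem
    rw [hmx, hminb, Nat.sub_self] at hdt
    omega
  · -- phi computes to μ
    have hdiv : ∀ x ∈ base t m n, x % t = 0 := by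
      intro x hx
      rcases mem_base t m n hx with rfl | rfl <;> simp [Nat.mul_mod_left]
    have hfilter : ((base t m n).map (· % t)).filter (· ≠ 0) = 0 := by
      rw [Multiset.eq_zero_iff_forall_notMem]
      intro x hx
      obtain ⟨hx1, hx2⟩ := Multiset.mem_filter.1 hx
      obtain ⟨p, hp, rfl⟩ := Multiset.mem_map.1 hx1
      exact hx2 (hdiv p hp)
    have hsum : ((base t m n).map (· / t)).sum = m := by
      rw [base, Multiset.map_add, Multiset.map_replicate, Multiset.map_replicate,
        Multiset.sum_add, Multiset.sum_replicate, Multiset.sum_replicate]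
      simp only [Nat.mul_div_cancel _ ht, smul_eq_mul]
      have key : n * (m / n) + m % n = m := Nat.div_add_mod m n
      have h2 : (n - m % n) * (m / n) = n * (m / n) - m % n * (m / n) := Nat.sub_mul n (m % n) (m / n)
      have h3 : m % n * (m / n) ≤ n * (m / n) := Nat.mul_le_mul_right _ hk.le
      have h4 : m % n * (m / n + 1) = m % n * (m / n) + m % n := by ring
      omega
    have hsnd : ((s.image (· % t)).erase 0) = ∅ := by
      rcases hs with rfl | rfl
      · simp
      · simp [Nat.mul_mod_left]
    simp only [phi]
    rw [hsum, hfilter, hsnd, add_zero]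

/-- Forward direction: every preimage has the candidate shape. -/
lemma forward (t : ℕ) (ht : 0 < t) (m : ℕ) (π : OP)
    (hG : InG t π) (hphi : phi t π = (Multiset.replicate m t, (∅ : Finset ℕ))) :
    ∃ n, 0 < n ∧ n ≤ m ∧ π.1 = base t m n ∧ n = Multiset.card π.1 ∧
      (π.2 = ∅ ∨ π.2 = {m / n * t}) := by
  obtain ⟨⟨hpos, hov⟩, hne, hdiff, hdiffmax⟩ := hG
  have h1 : Multiset.replicate ((π.1.map (· / t)).sum) t + (π.1.map (· % t)).filter (· ≠ 0)
      = Multiset.replicate m t := congrArg Prod.fst hphi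
  have hF : (π.1.map (· % t)).filter (· ≠ 0) = 0 := by
    rw [Multiset.eq_zero_iff_forall_notMem]
    intro x hx
    have hx' : x ∈ Multiset.replicate m t := by
      rw [← h1]; exact Multiset.mem_add.2 (Or.inr hx)
    have hxt : x = t := Multiset.eq_of_mem_replicate hx'
    obtain ⟨hx1, hx2⟩ := Multiset.mem_filter.1 hx
    obtain ⟨p, hp, rfl⟩ := Multiset.mem_map.1 hx1
    have : p % t < t := Nat.mod_lt p ht
    omega
  have hdvd : ∀ p ∈ π.1, p % t = 0 := by
    intro p hp
    by_contra h
    have : p % t ∈ (π.1.map (· % t)).filter (· ≠ 0) :=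
      Multiset.mem_filter.2 ⟨Multiset.mem_map_of_mem _ hp, h⟩
    rw [hF] at this
    exact Multiset.notMem_zero _ this
  have hS : (π.1.map (· / t)).sum = m := by
    rw [hF, add_zero] at h1
    have := congrArg Multiset.card h1
    simpa using this
  -- smallest part
  have hne' : ∃ p, p ∈ π.1 := Multiset.exists_mem_of_ne_zero hne
  have hmin_mem : π.minPart ∈ π.1 := by have := Nat.sInf_mem (s := {p | p ∈ π.1}) hne'; exact this
  obtain ⟨a, hmin_eq⟩ : ∃ a, π.minPart = a * t :=
    ⟨π.minPart / t, (Nat.div_mul_cancel (Nat.dvd_of_mod_eq_zero (hdvd _ hmin_mem))).symm⟩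
  have ha1 : 1 ≤ a := by
    have h0 := hpos _ hmin_mem
    rcases Nat.eq_zero_or_pos a with h | h
    · rw [hmin_eq, h] at h0; simp at h0
    · exact h
  have hmaxle : π.maxPart ≤ π.minPart + t := by omega
  have htwo : ∀ x ∈ π.1, x = a * t ∨ x = (a + 1) * t := by
    intro x hx
    obtain ⟨c, hxe⟩ : ∃ c, x = c * t :=
      ⟨x / t, (Nat.div_mul_cancel (Nat.dvd_of_mod_eq_zero (hdvd _ hx))).symm⟩
    have h1' : π.minPart ≤ x := Nat.sInf_le hx
    have h2' : x ≤ π.maxPart := Multiset.le_sup hx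
    have hrng : (a + 1) * t = a * t + t := by ring
    have hlo : a ≤ c := by
      have : a * t ≤ c * t := by omega
      exact Nat.le_of_mul_le_mul_right this ht
    have hhi : c ≤ a + 1 := by
      have : c * t ≤ (a + 1) * t := by omega
      exact Nat.le_of_mul_le_mul_right this ht
    rcases eq_or_lt_of_le hlo with h | h
    · exact Or.inl (by rw [hxe, ← h])
    · exact Or.inr (by rw [hxe, Nat.le_antisymm hhi h])
  have huv : a * t < (a + 1) * t := by
    have : (a + 1) * t = a * t + t := by ring
    omega
  set j := π.1.count (a * t) with hj_def
  set k := π.1.count ((a + 1) * t) with hk_def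
  have hdecomp : π.1 = Multiset.replicate j (a * t) + Multiset.replicate k ((a + 1) * t) := by
    conv_lhs => rw [← Multiset.filter_add_not (· = a * t) π.1]
    congr 1
    · rw [Multiset.filter_eq']
    · rw [Multiset.filter_congr (q := (· = (a + 1) * t)) ?_, Multiset.filter_eq']
      intro x hx
      rcases htwo x hx with rfl | rfl
      · exact iff_of_false (not_not_intro rfl) (Nat.ne_of_lt huv)
      · exact iff_of_true (Nat.ne_of_gt huv) rfl
  have hj1 : 1 ≤ j := Multiset.count_pos.2 (by rw [← hmin_eq]; exact hmin_mem)
  have hsum2 : j * a + k * (a + 1) = m := by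
    rw [hdecomp, Multiset.map_add, Multiset.map_replicate, Multiset.map_replicate,
      Multiset.sum_add, Multiset.sum_replicate, Multiset.sum_replicate] at hS
    simp only [Nat.mul_div_cancel _ ht, smul_eq_mul] at hS
    exact hS
  have hcard : Multiset.card π.1 = j + k := by
    rw [hdecomp]; simp
  have hja : j ≤ j * a := Nat.le_mul_of_pos_right j ha1
  have hka : k ≤ k * (a + 1) := Nat.le_mul_of_pos_right k (by omega)
  have hnm : j + k ≤ m := by omega
  have hmn : m = (j + k) * a + k := by
    have e1 : k * (a + 1) = k * a + k := by ring
    have e2 : (j + k) * a = j * a + k * a := by ring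
    omega
  have hkn : k < j + k := by omega
  have hdivq : m / (j + k) = a := by
    rw [hmn, Nat.mul_add_div (by omega), Nat.div_eq_of_lt hkn, add_zero]
  have hmodq : m % (j + k) = k := by
    rw [hmn, Nat.mul_add_mod, Nat.mod_eq_of_lt hkn]
  refine ⟨j + k, by omega, hnm, ?_, hcard.symm, ?_⟩
  · rw [base, hdivq, hmodq, hdecomp, show j + k - k = j from by omega]
  · -- overline set is ∅ or {a*t}
    rw [hdivq, ← Finset.subset_singleton_iff, Finset.subset_singleton_iff']
    intro b hb
    rcases htwo b (hov b hb) with rfl | h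
    · rfl
    · exfalso
      have hbmem : (a + 1) * t ∈ π.1 := h ▸ hov b hb
      have hmax : π.maxPart = (a + 1) * t := by
        apply le_antisymm
        · rw [OP.maxPart, Multiset.sup_le]
          intro x hx
          rcases htwo x hx with rfl | rfl
          · omega
          · exact le_rfl
        · exact Multiset.le_sup hbmem
      have hde : π.maxPart - π.minPart = t := by
        rw [hmax, hmin_eq, add_mul, one_mul, Nat.add_sub_cancel_left]
      exact hdiffmax hde (hmax ▸ h ▸ hb)

end PreimageProof

open PreimageProof in
theorem preimages_all_parts_t (t : ℕ) (ht : 0 < t) (m : ℕ) (hm : 0 < m)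
    (μ : OP) (hμ : μ = (Multiset.replicate m t, (∅ : Finset ℕ))) :
    Nat.card {π : OP // InG t π ∧ phi t π = μ} = 2 * m ∧
    Nat.card {π : OP // InG t π ∧ phi t π = μ ∧ π.o = 0} = m ∧
    Nat.card {π : OP // InG t π ∧ phi t π = μ ∧ π.2 = {π.minPart}} = m := by
  subst hμ
  -- membership of candidates
  have hmem : ∀ (n : ℕ), 0 < n → n ≤ m → ∀ b : Bool,
      InG t (cand t m n b) ∧
        phi t (cand t m n b) = (Multiset.replicate m t, (∅ : Finset ℕ)) := by
    intro n hn hnm b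
    exact backward t ht m n hn hnm _ (by cases b <;> simp [cand])
  have hcand_inj : ∀ (b c : Bool) (i i' : Fin m),
      cand t m (i.1 + 1) b = cand t m (i'.1 + 1) c → b = c ∧ i = i' := by
    intro b c i i' h
    have h1 : base t m (i.1 + 1) = base t m (i'.1 + 1) := congrArg Prod.fst h
    have hc := congrArg Multiset.card h1
    rw [card_base t m _ (Nat.succ_pos _), card_base t m _ (Nat.succ_pos _)] at hc
    have hii : i = i' := Fin.ext (by omega)
    subst hii
    have h2 := congrArg Prod.snd h
    cases b <;> cases c
    · exact ⟨rfl, rfl⟩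
    · simp only [cand] at h2
      exact absurd h2.symm (Finset.singleton_ne_empty _)
    · simp only [cand] at h2
      exact absurd h2 (Finset.singleton_ne_empty _)
    · exact ⟨rfl, rfl⟩
  refine ⟨?_, ?_, ?_⟩
  · -- full preimage set has 2m elements
    have hb : Function.Bijective (fun x : Bool × Fin m =>
        (⟨cand t m (x.2.1 + 1) x.1,
          (hmem _ (Nat.succ_pos _) x.2.2 x.1).1, (hmem _ (Nat.succ_pos _) x.2.2 x.1).2⟩ :
          {π : OP // InG t π ∧ phi t π = (Multiset.replicate m t, (∅ : Finset ℕ))})) := by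
      constructor
      · rintro ⟨b, i⟩ ⟨c, i'⟩ h
        obtain ⟨hbc, hii⟩ := hcand_inj b c i i' (Subtype.ext_iff.1 h)
        rw [hbc, hii]
      · rintro ⟨π, hG, hphi⟩
        obtain ⟨n, hn, hnm, hbase, hcard, hs⟩ := forward t ht m π hG hphi
        have hn1 : n - 1 + 1 = n := by omega
        rcases hs with h2 | h2
        · refine ⟨(false, ⟨n - 1, by omega⟩), Subtype.ext ?_⟩
          show cand t m (n - 1 + 1) false = π
          rw [hn1, cand, if_neg (by simp)]
          exact Prod.ext_iff.2 ⟨hbase.symm, h2.symm⟩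
        · refine ⟨(true, ⟨n - 1, by omega⟩), Subtype.ext ?_⟩
          show cand t m (n - 1 + 1) true = π
          rw [hn1, cand, if_pos rfl]
          exact Prod.ext_iff.2 ⟨hbase.symm, h2.symm⟩
    rw [← Nat.card_eq_of_bijective _ hb]
    simp [Nat.card_eq_fintype_card, two_mul]
  · -- non-overlined preimages: m elements
    have hb : Function.Bijective (fun i : Fin m =>
        (⟨cand t m (i.1 + 1) false,
          (hmem _ (Nat.succ_pos _) i.2 false).1, (hmem _ (Nat.succ_pos _) i.2 false).2,
          by simp [OP.o, cand]⟩ :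
          {π : OP // InG t π ∧ phi t π = (Multiset.replicate m t, (∅ : Finset ℕ)) ∧
            π.o = 0})) := by
      constructor
      · intro i i' h
        exact (hcand_inj false false i i' (Subtype.ext_iff.1 h)).2
      · rintro ⟨π, hG, hphi, ho⟩
        obtain ⟨n, hn, hnm, hbase, hcard, hs⟩ := forward t ht m π hG hphi
        have hn1 : n - 1 + 1 = n := by omega
        have h2 : π.2 = ∅ := Finset.card_eq_zero.1 ho
        refine ⟨⟨n - 1, by omega⟩, Subtype.ext ?_⟩
        show cand t m (n - 1 + 1) false = π
        rw [hn1, cand, if_neg (by simp)]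
        exact Prod.ext_iff.2 ⟨hbase.symm, h2.symm⟩
    rw [← Nat.card_eq_of_bijective _ hb]
    simp [Nat.card_eq_fintype_card]
  · -- overlined preimages: m elements
    have hb : Function.Bijective (fun i : Fin m =>
        (⟨cand t m (i.1 + 1) true,
          (hmem _ (Nat.succ_pos _) i.2 true).1, (hmem _ (Nat.succ_pos _) i.2 true).2,
          by rw [min_cand t m _ (Nat.succ_pos _) true]; simp [cand]⟩ :
          {π : OP // InG t π ∧ phi t π = (Multiset.replicate m t, (∅ : Finset ℕ)) ∧
            π.2 = {π.minPart}})) := by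
      constructor
      · intro i i' h
        exact (hcand_inj true true i i' (Subtype.ext_iff.1 h)).2
      · rintro ⟨π, hG, hphi, ho⟩
        obtain ⟨n, hn, hnm, hbase, hcard, hs⟩ := forward t ht m π hG hphi
        have hn1 : n - 1 + 1 = n := by omega
        have hmin : π.minPart = m / n * t := by
          have : π = (π.1, π.2) := rfl
          rw [this, OP.minPart]
          show sInf {p | p ∈ π.1} = m / n * t
          rw [hbase]
          exact min_base t m n hn
        have h2 : π.2 = {m / n * t} := by
          rcases hs with h2 | h2
          · rw [ho, hmin] at h2
            exact absurd h2 (Finset.singleton_ne_empty _)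
          · exact h2
        refine ⟨⟨n - 1, by omega⟩, Subtype.ext ?_⟩
        show cand t m (n - 1 + 1) true = π
        rw [hn1, cand, if_pos rfl]
        exact Prod.ext_iff.2 ⟨hbase.symm, h2.symm⟩
    rw [← Nat.card_eq_of_bijective _ hb]
    simp [Nat.card_eq_fintype_card]
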